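/- (Hashimoto; Bass) Let G be a finite connected simple graph with n vertices, m edges, adjacency matrix A, and degree diagonal matrix D. Then for every t ∈ ℂ, det(I_{2m} − t·(B − J_0)) · (1 − t²)^n = (1 − t²)^m · det(I_n − t·A + t²·(D − I_n)); equivalently the reciprocal of the Ihara zeta function satisfies Z(G,t)^{-1} = det(I_{2m} − t(B − J_0)) = (1 − t²)^{r−1}·det(I_n − tA + t²(D − I_n)), where r = m − n + 1 is the Betti number of G. -/
import Mathlib


variable {V : Type*} [Fintype V] [DecidableEq V]

/-- The matrix `B` on arcs (darts): `B_{ef} = 1` if `t(e) = o(f)`, else `0`. -/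
def arcMat (G : SimpleGraph V) [DecidableRel G.Adj] : Matrix G.Dart G.Dart ℂ :=
  Matrix.of fun e f => if e.snd = f.fst then 1 else 0

/-- The arc-reversal matrix `J₀`: `(J₀)_{ef} = 1` if `f = e⁻¹`, else `0`. -/
def arcRevMat (G : SimpleGraph V) [DecidableRel G.Adj] : Matrix G.Dart G.Dart ℂ :=
  Matrix.of fun e f => if f = e.symm then 1 else 0

set_option linter.unusedSectionVars false

namespace IharaAux
open Matrix
variable (G : SimpleGraph V) [DecidableRel G.Adj]

noncomputable def startMat : Matrix V G.Dart ℂ :=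
  Matrix.of fun v e => if e.fst = v then 1 else 0

noncomputable def endMat : Matrix V G.Dart ℂ :=
  Matrix.of fun v e => if e.snd = v then 1 else 0

lemma transpose_endMat_mul_startMat : (endMat G)ᵀ * startMat G = arcMat G := by
  ext e f
  simp only [Matrix.mul_apply, transpose_apply, endMat, startMat, arcMat, Matrix.of_apply,
    ite_mul, one_mul, zero_mul]
  simp only [Finset.sum_ite_eq, Finset.mem_univ, if_true]
  exact if_congr eq_comm rfl rfl

lemma startMat_mul_transpose_endMat : startMat G * (endMat G)ᵀ = G.adjMatrix ℂ := by
  ext u v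
  simp only [Matrix.mul_apply, transpose_apply, endMat, startMat, Matrix.of_apply,
    ite_mul, one_mul, zero_mul, SimpleGraph.adjMatrix_apply]
  by_cases h : G.Adj u v
  · have : ∀ e : G.Dart, (if e.fst = u then (if e.snd = v then (1:ℂ) else 0) else 0)
        = if e = SimpleGraph.Dart.mk (u, v) h then 1 else 0 := by
      intro e
      by_cases h1 : e.fst = u <;> by_cases h2 : e.snd = v <;>
        simp [h1, h2, SimpleGraph.Dart.ext_iff, Prod.ext_iff]
    rw [Finset.sum_congr rfl fun e _ => this e]
    simp [h]
  · rw [Finset.sum_eq_zero, if_neg h]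
    intro e _
    by_cases h1 : e.fst = u <;> by_cases h2 : e.snd = v <;> simp [h1, h2]
    exact absurd (h1 ▸ h2 ▸ e.adj) h

lemma startMat_mul_arcRevMat : startMat G * arcRevMat G = endMat G := by
  ext v f
  simp only [Matrix.mul_apply, startMat, endMat, arcRevMat, Matrix.of_apply,
    mul_ite, mul_one, mul_zero]
  have hiff : ∀ e : G.Dart, (f = e.symm) = (e = f.symm) := by
    intro e
    apply propext
    constructor <;> (intro h; simp [h])
  simp_rw [hiff]
  rw [Finset.sum_ite_eq' Finset.univ f.symm (fun e => if e.fst = v then (1:ℂ) else 0)]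
  simp

lemma arcRevMat_transpose : (arcRevMat G)ᵀ = arcRevMat G := by
  ext e f
  simp only [transpose_apply, arcRevMat, Matrix.of_apply]
  apply if_congr _ rfl rfl
  constructor <;> (intro h; simp [h])

lemma arcRevMat_mul_self : arcRevMat G * arcRevMat G = 1 := by
  ext e f
  simp only [Matrix.mul_apply, arcRevMat, Matrix.of_apply, ite_mul, one_mul, zero_mul]
  rw [Finset.sum_ite_eq' Finset.univ e.symm (fun g => if f = g.symm then (1:ℂ) else 0)]
  simp [Matrix.one_apply, eq_comm]

lemma startMat_mul_transpose_startMat :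
    startMat G * (startMat G)ᵀ = Matrix.diagonal (fun v => (G.degree v : ℂ)) := by
  ext u v
  simp only [Matrix.mul_apply, transpose_apply, startMat, Matrix.of_apply, ite_mul, one_mul,
    zero_mul, Matrix.diagonal_apply]
  by_cases h : u = v
  · subst h
    simp only [if_pos rfl]
    rw [← G.dart_fst_fiber_card_eq_degree u, if_pos trivial]
    have he : ∀ e : G.Dart, (if e.fst = u then (if e.fst = u then (1:ℂ) else 0) else 0)
        = if e.fst = u then 1 else 0 := by intro e; split <;> simp_all
    rw [Finset.sum_congr rfl fun e _ => he e, Finset.sum_boole]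
  · rw [Finset.sum_eq_zero, if_neg h]
    intro e _
    by_cases h1 : e.fst = u
    · rw [if_pos h1, if_neg fun h2 => h (h1.symm.trans h2)]
    · rw [if_neg h1]

end IharaAux

namespace IharaAux2
open Matrix
variable (G : SimpleGraph V) [DecidableRel G.Adj]

noncomputable def ord : V → ℕ := fun v => (Fintype.equivFin V v : ℕ)

lemma ord_inj : Function.Injective (ord (V := V)) :=
  fun a b h => (Fintype.equivFin V).injective (Fin.val_injective h)

def IsPos (d : G.Dart) : Prop := ord d.fst < ord d.snd

noncomputable instance : DecidablePred (IsPos G) := fun _ => Nat.decLt _ _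

lemma not_isPos_symm_of_isPos {d : G.Dart} (h : IsPos G d) : ¬ IsPos G d.symm := by
  simp only [IsPos, SimpleGraph.Dart.symm_toProd, Prod.fst_swap, Prod.snd_swap] at *
  omega

lemma isPos_or_symm (d : G.Dart) : IsPos G d ∨ IsPos G d.symm := by
  have hne : ord d.fst ≠ ord d.snd := fun h => d.adj.ne (ord_inj h)
  simp only [IsPos, SimpleGraph.Dart.symm_toProd, Prod.fst_swap, Prod.snd_swap] at *
  omega

noncomputable def posEquiv : ({d : G.Dart // IsPos G d} ⊕ {d : G.Dart // IsPos G d}) ≃ G.Dart := by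
  apply Equiv.ofBijective (Sum.elim (fun p => p.val) (fun p => p.val.symm))
  constructor
  · rintro (p | p) (q | q) h <;> simp only [Sum.elim_inl, Sum.elim_inr] at h
    · exact congrArg Sum.inl (Subtype.ext h)
    · exact absurd (h ▸ p.prop) (not_isPos_symm_of_isPos G q.prop)
    · exact absurd (h.symm ▸ q.prop) (not_isPos_symm_of_isPos G p.prop)
    · exact congrArg Sum.inr (Subtype.ext (by simpa using congrArg SimpleGraph.Dart.symm h))
  · intro d
    rcases isPos_or_symm G d with h | h
    · exact ⟨Sum.inl ⟨d, h⟩, rfl⟩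
    · exact ⟨Sum.inr ⟨d.symm, h⟩, by simp⟩

@[simp] lemma posEquiv_inl (p : {d : G.Dart // IsPos G d}) : posEquiv G (Sum.inl p) = p.val := rfl
@[simp] lemma posEquiv_inr (p : {d : G.Dart // IsPos G d}) :
    posEquiv G (Sum.inr p) = p.val.symm := rfl

lemma det_one_add_smul_arcRevMat (t : ℂ) :
    (1 + t • arcRevMat G).det
      = (1 - t ^ 2) ^ G.edgeFinset.card := by
  set J : Matrix G.Dart G.Dart ℂ := arcRevMat G with hJ
  set P := {d : G.Dart // IsPos G d} with hP
  have hcard : Fintype.card P = G.edgeFinset.card := by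
    have h1 : Fintype.card G.Dart = Fintype.card P + Fintype.card P := by
      rw [← Fintype.card_congr (posEquiv G), Fintype.card_sum]
    have h2 := G.dart_card_eq_twice_card_edges
    omega
  have hentry : ∀ d d' : G.Dart, (1 + t • J) d d'
      = (if d = d' then 1 else 0) + t * (if d' = d.symm then 1 else 0) := by
    intro d d'
    simp [hJ, arcRevMat, Matrix.one_apply, Matrix.add_apply]
  have hsymminj : ∀ d d' : G.Dart, d.symm = d'.symm ↔ d = d' := fun d d' =>
    (SimpleGraph.Dart.symm_involutive.injective).eq_iff
  have hsub : (1 + t • J).submatrix (posEquiv G) (posEquiv G) =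
      Matrix.fromBlocks 1 (t • 1) (t • 1) 1 := by
    ext x y
    rcases x with p | p <;> rcases y with q | q <;>
      rw [Matrix.submatrix_apply] <;>
      simp only [posEquiv_inl, posEquiv_inr, hentry, Matrix.fromBlocks_apply₁₁,
        Matrix.fromBlocks_apply₁₂, Matrix.fromBlocks_apply₂₁, Matrix.fromBlocks_apply₂₂,
        Matrix.smul_apply, Matrix.one_apply, smul_eq_mul]
    · rw [if_neg (fun h : (q : G.Dart) = (p : G.Dart).symm =>
        not_isPos_symm_of_isPos G p.prop (h ▸ q.prop)), mul_zero, add_zero,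
        if_congr Subtype.coe_inj rfl rfl]
    · rw [if_neg (fun h : (p : G.Dart) = (q : G.Dart).symm =>
        not_isPos_symm_of_isPos G q.prop (h ▸ p.prop)), zero_add,
        if_congr (((hsymminj _ _).trans Subtype.coe_inj).trans eq_comm) rfl rfl]
    · rw [if_neg (fun h : (p : G.Dart).symm = (q : G.Dart) =>
        not_isPos_symm_of_isPos G p.prop (h.symm ▸ q.prop)), zero_add]
      have hiff : ((q : G.Dart) = (p : G.Dart).symm.symm) ↔ p = q := by
        rw [SimpleGraph.Dart.symm_symm]
        exact ⟨fun h => Subtype.ext h.symm, fun h => congrArg _ h.symm⟩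
      rw [if_congr hiff rfl rfl]
    · rw [if_neg (fun h : (q : G.Dart).symm = (p : G.Dart).symm.symm =>
        not_isPos_symm_of_isPos G q.prop
          (by rw [SimpleGraph.Dart.symm_symm] at h; exact h.symm ▸ p.prop)),
        mul_zero, add_zero, if_congr ((hsymminj _ _).trans Subtype.coe_inj) rfl rfl]
  have hdet := Matrix.det_submatrix_equiv_self (posEquiv G) (1 + t • J)
  rw [← hdet, hsub, Matrix.det_fromBlocks_one₂₂]
  have hbl : (1 : Matrix P P ℂ) - (t • 1) * (t • 1) = (1 - t^2) • (1 : Matrix P P ℂ) := by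
    rw [smul_mul_smul_comm, one_mul, sub_smul, one_smul, pow_two]
  rw [hbl, Matrix.det_smul, Matrix.det_one, mul_one, hcard]

end IharaAux2

open Matrix in
theorem ihara_zeta_bass (G : SimpleGraph V) [DecidableRel G.Adj] (hG : G.Connected) (t : ℂ) :
    (1 - t • (arcMat G - arcRevMat G)).det * (1 - t ^ 2) ^ (Fintype.card V) =
      (1 - t ^ 2) ^ G.edgeFinset.card *
        (1 - t • (G.adjMatrix ℂ) +
          t ^ 2 • (Matrix.diagonal (fun v => (G.degree v : ℂ)) - 1)).det := by
  by_cases hc : (1 : ℂ) - t ^ 2 = 0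
  · -- degenerate case
    have hn : Fintype.card V ≠ 0 := by
      have : Nonempty V := hG.nonempty
      simp [Fintype.card_ne_zero]
    by_cases hm : G.edgeFinset.card = 0
    · have hbot : G = ⊥ := by
        rw [← SimpleGraph.edgeFinset_eq_empty]
        exact Finset.card_eq_zero.mp hm
      have hsing : Subsingleton V := by
        constructor
        intro a b
        have := hG.preconnected a b
        rwa [hbot, SimpleGraph.reachable_bot] at this
      have : Nonempty V := hG.nonempty
      haveI : Unique V := uniqueOfSubsingleton (Classical.arbitrary V)
      subst hbot
      rw [hc, zero_pow hn, mul_zero, hm, pow_zero, one_mul, Matrix.det_unique]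
      simp only [Matrix.add_apply, Matrix.sub_apply, Matrix.smul_apply, Matrix.one_apply_eq,
        SimpleGraph.adjMatrix_apply, Matrix.diagonal_apply_eq, smul_eq_mul,
        SimpleGraph.bot_degree, SimpleGraph.bot_adj, if_false]
      have hdeg : ((⊥ : SimpleGraph V).degree default : ℂ) = 0 := by
        norm_cast
        simp [SimpleGraph.degree, SimpleGraph.neighborFinset_eq_filter]
      rw [hdeg]
      linear_combination -hc
    · rw [hc, zero_pow hn, mul_zero, zero_pow hm, zero_mul]
  · -- main case
    set c : ℂ := 1 - t ^ 2 with hcdef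
    set J := arcRevMat G
    set X := arcMat G
    set S := IharaAux.startMat G
    set T := IharaAux.endMat G
    set A := G.adjMatrix ℂ
    set Dg := Matrix.diagonal (fun v => (G.degree v : ℂ)) with hDg
    have hJJ : J * J = 1 := IharaAux.arcRevMat_mul_self G
    have hJt : Jᵀ = J := IharaAux.arcRevMat_transpose G
    have hTS : Tᵀ * S = X := IharaAux.transpose_endMat_mul_startMat G
    have hST : S * Tᵀ = A := IharaAux.startMat_mul_transpose_endMat G
    have hSJ : S * J = T := IharaAux.startMat_mul_arcRevMat G
    have hSS : S * Sᵀ = Dg := IharaAux.startMat_mul_transpose_startMat G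
    have hTT : T * Tᵀ = Dg := by
      rw [← hSJ, Matrix.transpose_mul, hJt, Matrix.mul_assoc, ← Matrix.mul_assoc J J,
        hJJ, Matrix.one_mul, hSS]
    have key1 : (1 + t • J) * (1 - t • J) = c • (1 : Matrix G.Dart G.Dart ℂ) := by
      rw [add_mul, one_mul, mul_sub, mul_one, smul_mul_smul_comm, hJJ, hcdef, sub_smul,
        one_smul]
      module
    set M : Matrix G.Dart G.Dart ℂ := 1 - (t * c⁻¹) • ((1 - t • J) * (Tᵀ * S)) with hM
    have hfact : (1 + t • J) * M = 1 - t • (X - J) := by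
      rw [hM, mul_sub, mul_one, Matrix.mul_smul, ← Matrix.mul_assoc, key1,
        Matrix.smul_mul, Matrix.one_mul, smul_smul, mul_assoc, inv_mul_cancel₀ hc, mul_one,
        hTS]
      module
    set N : Matrix V V ℂ := 1 - (t * c⁻¹) • (A - t • Dg) with hN
    have hdetM : M.det = N.det := by
      have h1 : M = 1 + (-(t * c⁻¹) • ((1 - t • J) * Tᵀ)) * S := by
        rw [hM, Matrix.smul_mul, neg_smul, Matrix.mul_assoc, ← sub_eq_add_neg]
      have h2 : (1 : Matrix V V ℂ) + S * (-(t * c⁻¹) • ((1 - t • J) * Tᵀ)) = N := by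
        rw [Matrix.mul_smul, neg_smul, ← sub_eq_add_neg, hN]
        congr 2
        rw [Matrix.sub_mul, Matrix.one_mul, Matrix.mul_sub, hST, Matrix.smul_mul,
          Matrix.mul_smul, ← Matrix.mul_assoc, hSJ, hTT]
      rw [h1, Matrix.det_one_add_mul_comm, h2]
    have hct : c * (t * c⁻¹) = t := by field_simp
    have h3 : c • N = c • (1 : Matrix V V ℂ) - t • (A - t • Dg) := by
      rw [hN, smul_sub, smul_smul, hct]
    have htarget : (1 - t • A + t ^ 2 • (Dg - 1)) = c • N := by
      rw [h3, hcdef, sub_smul, one_smul]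
      module
    have hdetJ : (1 + t • J).det = c ^ G.edgeFinset.card := IharaAux2.det_one_add_smul_arcRevMat G t
    rw [htarget, Matrix.det_smul, ← hfact, Matrix.det_mul, hdetJ, hdetM]
    ring
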